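/- Let E be a real inner product space, Ω ⊆ E a nonempty convex set, and g : E → ℝ a λ-strongly convex function on Ω with λ ≥ 0. Fix w_prev ∈ E and γ > 0, and let w₊ ∈ Ω be a minimizer over Ω of the map w ↦ g(w) + (γ/2)‖w − w_prev‖². Then for every w ∈ Ω one has ((λ + γ)/γ)‖w₊ − w‖² ≤ ‖w_prev − w‖² − ‖w_prev − w₊‖² − (2/γ)(g(w₊) − g(w)). -/

import Mathlib

open scoped RealInnerProductSpace

/-- Convex-combination norm identity. -/
lemma comb_norm {E : Type*} [NormedAddCommGroup E] [InnerProductSpace ℝ E]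
    (u v : E) {a b : ℝ} (ha : 0 ≤ a) (hb : 0 ≤ b) (hab : a + b = 1) :
    ‖a • u + b • v‖ ^ 2 = a * ‖u‖ ^ 2 + b * ‖v‖ ^ 2 - a * b * ‖u - v‖ ^ 2 := by
  rw [norm_add_sq_real, norm_sub_sq_real, norm_smul, norm_smul,
    real_inner_smul_left, inner_smul_right, Real.norm_of_nonneg ha, Real.norm_of_nonneg hb,
    mul_pow, mul_pow]
  obtain rfl := eq_sub_of_add_eq hab
  ring_nf

/-- Exact identity for the prox quadratic along a convex combination. -/
lemma quad_identity {E : Type*} [NormedAddCommGroup E] [InnerProductSpace ℝ E]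
    (c x y : E) {a b : ℝ} (ha : 0 ≤ a) (hb : 0 ≤ b) (hab : a + b = 1) (γ : ℝ) :
    γ / 2 * ‖a • x + b • y - c‖ ^ 2 =
      a * (γ / 2 * ‖x - c‖ ^ 2) + b * (γ / 2 * ‖y - c‖ ^ 2)
        - a * b * (γ / 2 * ‖x - y‖ ^ 2) := by
  have hc : a • x + b • y - c = a • (x - c) + b • (y - c) := by
    rw [smul_sub, smul_sub, sub_add_sub_comm, ← add_smul, hab, one_smul]
  have hxy : x - y = (x - c) - (y - c) := by abel
  rw [hc, hxy, comb_norm (x - c) (y - c) ha hb hab]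
  ring

theorem stmt_1 {E : Type*} [NormedAddCommGroup E] [InnerProductSpace ℝ E]
    {Ω : Set E} (hne : Ω.Nonempty) (hconv : Convex ℝ Ω)
    {lam : ℝ} (hlam : 0 ≤ lam) {g : E → ℝ} (hg : StrongConvexOn Ω lam g)
    (wprev : E) {γ : ℝ} (hγ : 0 < γ)
    {wplus : E} (hmem : wplus ∈ Ω)
    (hmin : IsMinOn (fun w => g w + γ / 2 * ‖w - wprev‖ ^ 2) Ω wplus) :
    ∀ w ∈ Ω,
      (lam + γ) / γ * ‖wplus - w‖ ^ 2 ≤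
        ‖wprev - w‖ ^ 2 - ‖wprev - wplus‖ ^ 2 - 2 / γ * (g wplus - g w) := by
  intro w hw
  -- key strong-minimizer inequality
  have key : ∀ t ∈ Set.Ioo (0:ℝ) 1,
      (1 - t) * ((lam + γ) / 2 * ‖w - wplus‖ ^ 2) ≤
        (g w + γ / 2 * ‖w - wprev‖ ^ 2) - (g wplus + γ / 2 * ‖wplus - wprev‖ ^ 2) := by
    intro t ht
    obtain ⟨ht0, ht1⟩ := ht
    have ha : (0:ℝ) ≤ t := ht0.le
    have hb : (0:ℝ) ≤ 1 - t := by linarith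
    have hab : t + (1 - t) = 1 := by ring
    have hz : t • w + (1 - t) • wplus ∈ Ω := hconv hw hmem ha hb hab
    have hgineq := hg.2 hw hmem ha hb hab
    have hquad := quad_identity wprev w wplus ha hb hab γ
    have hminz := hmin hz
    simp only [Set.mem_setOf_eq, smul_eq_mul] at hgineq hminz
    have h2 : t * ((1 - t) * ((lam + γ) / 2 * ‖w - wplus‖ ^ 2)) ≤
        t * ((g w + γ / 2 * ‖w - wprev‖ ^ 2) - (g wplus + γ / 2 * ‖wplus - wprev‖ ^ 2)) := by
      nlinarith [hgineq, hquad, hminz]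
    exact le_of_mul_le_mul_left h2 ht0
  -- pass to the limit t → 0⁺
  have hlim : (lam + γ) / 2 * ‖w - wplus‖ ^ 2 ≤
      (g w + γ / 2 * ‖w - wprev‖ ^ 2) - (g wplus + γ / 2 * ‖wplus - wprev‖ ^ 2) := by
    have htend : Filter.Tendsto
        (fun t : ℝ => (1 - t) * ((lam + γ) / 2 * ‖w - wplus‖ ^ 2))
        (nhdsWithin 0 (Set.Ioi 0)) (nhds ((lam + γ) / 2 * ‖w - wplus‖ ^ 2)) := by
      have h : Filter.Tendsto (fun t : ℝ => (1 - t) * ((lam + γ) / 2 * ‖w - wplus‖ ^ 2))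
          (nhds 0) (nhds ((1 - 0) * ((lam + γ) / 2 * ‖w - wplus‖ ^ 2))) :=
        ((Filter.tendsto_id (α := ℝ) (x := nhds 0)).const_sub 1).mul_const _
      simp only [sub_zero, one_mul] at h
      exact h.mono_left nhdsWithin_le_nhds
    refine le_of_tendsto htend ?_
    filter_upwards [Ioo_mem_nhdsGT_of_mem (by norm_num : (0:ℝ) ∈ Set.Ico (0:ℝ) 1)] with t ht
    exact key t ht
  -- rearrange
  have hnorm1 : ‖wprev - w‖ = ‖w - wprev‖ := norm_sub_rev _ _
  have hnorm2 : ‖wprev - wplus‖ = ‖wplus - wprev‖ := norm_sub_rev _ _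
  have hnorm3 : ‖wplus - w‖ = ‖w - wplus‖ := norm_sub_rev _ _
  rw [hnorm1, hnorm2, hnorm3, ← mul_le_mul_iff_of_pos_right hγ]
  have e1 : (lam + γ) / γ * ‖w - wplus‖ ^ 2 * γ = (lam + γ) * ‖w - wplus‖ ^ 2 := by
    field_simp
  have e2 : (‖w - wprev‖ ^ 2 - ‖wplus - wprev‖ ^ 2 - 2 / γ * (g wplus - g w)) * γ =
      (‖w - wprev‖ ^ 2 - ‖wplus - wprev‖ ^ 2) * γ - 2 * (g wplus - g w) := by
    field_simp
  rw [e1, e2]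
  nlinarith [hlim]
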